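/- Let (X,d) be a metric space, let P and C be finite nonempty subsets of X, and let a* ∈ P satisfy d(a*,C) = max_{p∈P} d(p,C). Let γ ≥ 4, R₀ > 0, N ∈ ℕ, and set r_j = R₀/2^j for 0 ≤ j ≤ N. Let Y₀, …, Y_N be finite subsets of P such that: Y₀ = {y₀} where every p ∈ P satisfies d(p,y₀) ≤ 2R₀; and for every 1 ≤ j ≤ N, every p ∈ P is within distance 2·r_j of some point of Y_j. Define Z₀ = Y₀ and, for 0 ≤ j < N, Z_{j+1} = { y ∈ Y_{j+1} : (∃ z ∈ Z_j with d(y,z) ≤ γ·r_j) and (for every z ∈ Z_j, d(y,C) ≥ d(z,C) − r_j) }. Then for every 0 ≤ j ≤ N there exists z ∈ Z_j with d(z,a*) ≤ 2·r_j. -/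
import Mathlib


/-- Lemma 3 of the paper (every candidate set `Z_j` contains a point
within `2 r_j` of an exact furthest neighbor `a*`). -/
theorem stmt_3 {X : Type*} [MetricSpace X] (P C : Finset X)
    (hP : P.Nonempty) (hC : C.Nonempty)
    (astar : X) (hastar : astar ∈ P)
    (hfar : ∀ p ∈ P, Metric.infDist p (C : Set X) ≤ Metric.infDist astar (C : Set X))
    (γ R₀ : ℝ) (hγ : 4 ≤ γ) (hR₀ : 0 < R₀) (N : ℕ)
    (Y : ℕ → Finset X) (hYP : ∀ j ≤ N, Y j ⊆ P)
    (y₀ : X) (hY0 : Y 0 = {y₀}) (hy₀ : ∀ p ∈ P, dist p y₀ ≤ 2 * R₀)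
    (hcov : ∀ j, 1 ≤ j → j ≤ N → ∀ p ∈ P, ∃ y ∈ Y j, dist p y ≤ 2 * (R₀ / 2 ^ j))
    (Z : ℕ → Finset X) (hZ0 : Z 0 = Y 0)
    (hZ : ∀ j < N, ∀ y : X, y ∈ Z (j + 1) ↔ y ∈ Y (j + 1) ∧
      (∃ z ∈ Z j, dist y z ≤ γ * (R₀ / 2 ^ j)) ∧
      (∀ z ∈ Z j, Metric.infDist y (C : Set X) ≥
        Metric.infDist z (C : Set X) - R₀ / 2 ^ j)) :
    ∀ j ≤ N, ∃ z ∈ Z j, dist z astar ≤ 2 * (R₀ / 2 ^ j) := by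
  have key : ∀ j ≤ N, Z j ⊆ P ∧ ∃ z ∈ Z j, dist z astar ≤ 2 * (R₀ / 2 ^ j) := by
    intro j
    induction j with
    | zero =>
      intro _
      constructor
      · rw [hZ0]; exact hYP 0 (Nat.zero_le N)
      · refine ⟨y₀, ?_, ?_⟩
        · rw [hZ0, hY0]; simp
        · rw [dist_comm]; simpa using hy₀ astar hastar
    | succ j ih =>
      intro hjN
      have hjN' : j < N := hjN
      obtain ⟨hZP, z, hzZ, hz⟩ := ih (le_of_lt hjN')
      -- pick y ∈ Y (j+1) close to astar
      obtain ⟨y, hyY, hy⟩ := hcov (j + 1) (Nat.le_add_left 1 j) hjN astar hastar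
      have hyP : y ∈ P := hYP (j + 1) hjN hyY
      have hr : (0:ℝ) < R₀ / 2 ^ j := by positivity
      have hhalf : R₀ / 2 ^ (j + 1) = (R₀ / 2 ^ j) / 2 := by
        rw [pow_succ]; ring
      have hyast : dist astar y ≤ R₀ / 2 ^ j := by
        calc dist astar y ≤ 2 * (R₀ / 2 ^ (j+1)) := hy
        _ = R₀ / 2 ^ j := by rw [hhalf]; ring
      have hyZ : y ∈ Z (j + 1) := by
        rw [hZ j hjN' y]
        refine ⟨hyY, ⟨z, hzZ, ?_⟩, ?_⟩
        · calc dist y z ≤ dist y astar + dist astar z := dist_triangle _ _ _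
            _ ≤ R₀ / 2 ^ j + 2 * (R₀ / 2 ^ j) := by
                rw [dist_comm y astar, dist_comm astar z]
                exact add_le_add hyast hz
            _ = 3 * (R₀ / 2 ^ j) := by ring
            _ ≤ γ * (R₀ / 2 ^ j) := by nlinarith
        · intro w hwZ
          have hwP : w ∈ P := hZP hwZ
          have h1 : Metric.infDist w (C : Set X) ≤ Metric.infDist astar (C : Set X) :=
            hfar w hwP
          have h2 : Metric.infDist astar (C : Set X) ≤
              Metric.infDist y (C : Set X) + dist astar y :=
            Metric.infDist_le_infDist_add_dist
          linarith
      refine ⟨?_, y, hyZ, ?_⟩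
      · intro x hx
        exact hYP (j + 1) hjN ((hZ j hjN' x).mp hx).1
      · rw [dist_comm]; exact hy
  intro j hj
  exact (key j hj).2
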